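/- Let C be a closed set of conics in PG(2,q) with |C| = d − 1 (so the union of the conics of C with the point (0,0,1) is a degree-d maximal arc M of Mathon type), and let F_{α0,β0,λ0} with λ0 ∈ F* and Tr(α0β0) = 1 be a conic whose point set is disjoint from the point set of every member of C. Then there is exactly one closed set C' of conics with |C'| = 2d − 1 such that C ∪ {F_{α0,β0,λ0}} ⊆ C'; i.e., there is a unique degree-2d maximal arc of Mathon type with nucleus (0,0,1) containing M and the given conic. -/

import Mathlib

/-!
STATEMENT 3: Synthetic version of Mathon's theorem.  Given a closed set `C` of
conics with `|C| = d - 1` (yielding a degree-`d` maximal arc of Mathon type with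
nucleus `(0,0,1)`), and a further conic `F_{α0,β0,λ0}` (with `λ0 ≠ 0`,
`Tr(α0 β0) = 1`) disjoint from every member of `C`, there is a unique closed set
`C'` of conics with `|C'| = 2d - 1` containing `C ∪ {F_{α0,β0,λ0}}`.
-/

open Projectivization

noncomputable section

abbrev F (h : ℕ) : Type := GaloisField 2 h

/-- The absolute trace map from `GF(2^h)` onto `GF(2)`. -/
def Tr {h : ℕ} (x : F h) : ZMod 2 := Algebra.trace (ZMod 2) (F h) x

/-- Points of the Desarguesian projective plane `PG(2, 2^h)`. -/
abbrev Pt (h : ℕ) := Projectivization (F h) (Fin 3 → F h)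

/-- The point set of the conic `F_{α,β,λ} = {(x,y,z) : αx² + xy + βy² + λz² = 0}`. -/
def conic {h : ℕ} (α β lam : F h) : Set (Pt h) :=
  {P | α * P.rep 0 ^ 2 + P.rep 0 * P.rep 1 + β * P.rep 1 ^ 2 + lam * P.rep 2 ^ 2 = 0}

/-- Mathon's composition of conics, on the level of parameter triples `(α, β, λ)`. -/
def compose {h : ℕ} (c c' : F h × F h × F h) : F h × F h × F h :=
  ((c.1 * c.2.2 + c'.1 * c'.2.2) / (c.2.2 + c'.2.2),
   (c.2.1 * c.2.2 + c'.2.1 * c'.2.2) / (c.2.2 + c'.2.2),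
   c.2.2 + c'.2.2)

/-- A closed set of conics, given by a finite set of parameter triples `(α, β, λ)`. -/
def IsClosedConicSet {h : ℕ} (C : Finset (F h × F h × F h)) : Prop :=
  (∀ c ∈ C, c.2.2 ≠ 0 ∧ Tr (c.1 * c.2.1) = 1) ∧
  (∀ c ∈ C, ∀ c' ∈ C, c ≠ c' → c.2.2 ≠ c'.2.2) ∧
  (∀ c ∈ C, ∀ c' ∈ C, c ≠ c' → compose c c' ∈ C)

/-! ### Auxiliary lemmas -/

namespace MathonAux

lemma two_eq_zero {h : ℕ} : (2 : F h) = 0 := by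
  have := CharTwo.add_self_eq_zero (1 : F h)
  linear_combination this

lemma zmod2_cases (u : ZMod 2) : u = 0 ∨ u = 1 := by revert u; decide

lemma Tr_add {h : ℕ} (x y : F h) : Tr (x + y) = Tr x + Tr y :=
  map_add (Algebra.trace (ZMod 2) (F h)) x y

def frobAE (h : ℕ) : F h ≃ₐ[ZMod 2] F h :=
  AlgEquiv.ofBijective
    { toRingHom := frobenius (F h) 2
      commutes' := fun c => by
        show frobenius (F h) 2 ((algebraMap (ZMod 2) (F h)) c) = _
        rw [frobenius_def, ← map_pow]
        congr 1
        have : ∀ c : ZMod 2, c ^ 2 = c := by decide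
        exact this c }
    (Finite.injective_iff_bijective.mp (frobenius_inj (F h) 2))

lemma Tr_sq {h : ℕ} (x : F h) : Tr (x ^ 2) = Tr x := by
  have := Algebra.trace_eq_of_algEquiv (frobAE h) x
  simpa [frobAE, frobenius_def, Tr, AlgEquiv.ofBijective] using this

lemma exists_sq {h : ℕ} (t : F h) : ∃ z : F h, z ^ 2 = t := by
  have hinj : Function.Injective (fun x : F h => x ^ 2) := by
    intro a b hab
    exact frobenius_inj (F h) 2 (by simpa [frobenius_def] using hab)
  exact Finite.surjective_of_injective hinj t

lemma artin_schreier {h : ℕ} (y0 : F h) (hy0 : Tr y0 = 1) (t : F h) (ht : Tr t = 0) :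
    ∃ s : F h, s ^ 2 + s = t := by
  classical
  haveI : Fintype (F h) := Fintype.ofFinite _
  have two : (2 : F h) = 0 := two_eq_zero
  set f : F h → F h := fun s => s ^ 2 + s with hf
  set T : Finset (F h) := Finset.image f Finset.univ with hT
  set Z : Finset (F h) := Finset.univ.filter (fun t => Tr t = 0) with hZ
  have hTZ : T ⊆ Z := by
    intro a ha
    rw [hT, Finset.mem_image] at ha
    obtain ⟨s, _, rfl⟩ := ha
    simp only [hZ, Finset.mem_filter, Finset.mem_univ, true_and, hf]
    rw [Tr_add, Tr_sq]
    exact CharTwo.add_self_eq_zero _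
  have hfib : ∀ a : F h, (Finset.univ.filter (fun s => f s = f a)) = {a, a + 1} := by
    intro a
    ext b
    simp only [Finset.mem_filter, Finset.mem_univ, true_and, Finset.mem_insert,
      Finset.mem_singleton, hf]
    constructor
    · intro hb
      have h2 : (b + a) ^ 2 = b ^ 2 + a ^ 2 := CharTwo.add_sq b a
      have hz : (b + a) * (b + a + 1) = 0 := by
        linear_combination hb + h2 + (a ^ 2 + a) * two
      rcases mul_eq_zero.mp hz with hc | hc
      · left; linear_combination hc - a * two
      · right; linear_combination hc - (a + 1) * two
    · rintro (rfl | rfl)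
      · rfl
      · linear_combination (a + 1) * two
  have hcardT : (Finset.univ : Finset (F h)).card = 2 * T.card := by
    have hstep : (Finset.univ : Finset (F h)).card
        = ∑ b ∈ T, (Finset.univ.filter (fun a => f a = b)).card :=
      Finset.card_eq_sum_card_fiberwise
        (fun x _ => Finset.mem_image_of_mem f (Finset.mem_univ x))
    have hfib2 : ∀ b ∈ T, (Finset.univ.filter (fun a => f a = b)).card = 2 := by
      intro b hb
      rw [hT, Finset.mem_image] at hb
      obtain ⟨a, _, rfl⟩ := hb
      rw [hfib a, Finset.card_insert_of_notMem, Finset.card_singleton]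
      simp only [Finset.mem_singleton]
      intro hcon
      have : (1 : F h) = 0 := by linear_combination -hcon
      exact one_ne_zero this
    rw [hstep, Finset.sum_congr rfl hfib2, Finset.sum_const, smul_eq_mul, mul_comm]
  have hcardZ : (Finset.univ : Finset (F h)).card = 2 * Z.card := by
    have hbij : Z.card = (Finset.univ.filter (fun t : F h => ¬ Tr t = 0)).card := by
      apply Finset.card_bij' (fun x _ => x + y0) (fun x _ => x + y0)
      · intro x hx
        simp only [hZ, Finset.mem_filter, Finset.mem_univ, true_and] at hx ⊢
        rw [Tr_add, hx, hy0]
        decide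
      · intro x hx
        simp only [hZ, Finset.mem_filter, Finset.mem_univ, true_and] at hx ⊢
        rcases zmod2_cases (Tr x) with hc | hc
        · exact absurd hc hx
        · rw [Tr_add, hc, hy0]; decide
      · intro x _; rw [add_assoc]; simp [CharTwo.add_self_eq_zero]
      · intro x _; rw [add_assoc]; simp [CharTwo.add_self_eq_zero]
    have hsplit : Z.card + (Finset.univ.filter (fun t : F h => ¬ Tr t = 0)).card
        = (Finset.univ : Finset (F h)).card := by
      rw [hZ]
      convert Finset.card_filter_add_card_filter_not
        (s := Finset.univ) (p := fun t : F h => Tr t = 0) using 3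
    omega
  have hZT : Z ⊆ T := by
    rw [Finset.eq_of_subset_of_card_le hTZ (by omega)]
  have : t ∈ T := hZT (by simp [hZ, ht])
  rw [hT, Finset.mem_image] at this
  obtain ⟨s, _, hs⟩ := this
  exact ⟨s, hs⟩

lemma mem_conic_iff {h : ℕ} (α β lam : F h) (v : Fin 3 → F h) (hv : v ≠ 0) :
    Projectivization.mk (F h) v hv ∈ conic α β lam ↔
      α * v 0 ^ 2 + v 0 * v 1 + β * v 1 ^ 2 + lam * v 2 ^ 2 = 0 := by
  set P := Projectivization.mk (F h) v hv with hP
  have hrep : Projectivization.mk (F h) P.rep P.rep_nonzero = P := Projectivization.mk_rep P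
  rw [hP] at hrep
  rw [Projectivization.mk_eq_mk_iff] at hrep
  obtain ⟨a, ha⟩ := hrep
  have hcoords : ∀ i, P.rep i = (a : F h) * v i := by
    intro i
    rw [← ha]
    simp [Units.smul_def]
  have key : α * P.rep 0 ^ 2 + P.rep 0 * P.rep 1 + β * P.rep 1 ^ 2 + lam * P.rep 2 ^ 2
      = (a : F h) ^ 2 * (α * v 0 ^ 2 + v 0 * v 1 + β * v 1 ^ 2 + lam * v 2 ^ 2) := by
    rw [hcoords 0, hcoords 1, hcoords 2]; ring
  constructor
  · intro hm
    have this2 : α * P.rep 0 ^ 2 + P.rep 0 * P.rep 1 + β * P.rep 1 ^ 2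
        + lam * P.rep 2 ^ 2 = 0 := hm
    rw [key] at this2
    rcases mul_eq_zero.mp this2 with hc | hc
    · exact absurd (pow_eq_zero_iff (n := 2) (by norm_num) |>.mp hc) (Units.ne_zero a)
    · exact hc
  · intro he
    show α * P.rep 0 ^ 2 + P.rep 0 * P.rep 1 + β * P.rep 1 ^ 2 + lam * P.rep 2 ^ 2 = 0
    rw [key, he, mul_zero]

lemma common_point {h : ℕ} (α β lam α' β' lam' : F h) (v : Fin 3 → F h) (hv : v ≠ 0)
    (h1 : α * v 0 ^ 2 + v 0 * v 1 + β * v 1 ^ 2 + lam * v 2 ^ 2 = 0)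
    (h2 : α' * v 0 ^ 2 + v 0 * v 1 + β' * v 1 ^ 2 + lam' * v 2 ^ 2 = 0) :
    ¬ Disjoint (conic α β lam) (conic α' β' lam') := by
  rw [Set.not_disjoint_iff]
  exact ⟨Projectivization.mk (F h) v hv, (mem_conic_iff α β lam v hv).mpr h1,
    (mem_conic_iff α' β' lam' v hv).mpr h2⟩

end MathonAux

namespace MathonAux

/-- If `M = lam + lam' ≠ 0` and the binary quadratic
`(α lam' + α' lam) x² + M x y + (β lam' + β' lam) y² = 0` has a nontrivial root,
then the two conics intersect. -/
lemma quad_common_point {h : ℕ} (α β lam α' β' lam' x y : F h)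
    (hM : lam + lam' ≠ 0) (hxy : ¬ (x = 0 ∧ y = 0))
    (hQ : (α * lam' + α' * lam) * x ^ 2 + (lam + lam') * x * y
        + (β * lam' + β' * lam) * y ^ 2 = 0) :
    ¬ Disjoint (conic α β lam) (conic α' β' lam') := by
  have two : (2 : F h) = 0 := two_eq_zero
  obtain ⟨z, hz0⟩ := exists_sq (((α + α') * x ^ 2 + (β + β') * y ^ 2) / (lam + lam'))
  have hz : (lam + lam') * z ^ 2 = (α + α') * x ^ 2 + (β + β') * y ^ 2 := by
    rw [hz0]; field_simp
  set v : Fin 3 → F h := ![x, y, z] with hvdef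
  have hv0 : v 0 = x := rfl
  have hv1 : v 1 = y := rfl
  have hv2 : v 2 = z := rfl
  have hv : v ≠ 0 := by
    intro hcon
    apply hxy
    constructor
    · rw [← hv0, hcon]; rfl
    · rw [← hv1, hcon]; rfl
  apply common_point α β lam α' β' lam' v hv
  · rw [hv0, hv1, hv2]
    have e1 : (lam + lam') * (α * x ^ 2 + x * y + β * y ^ 2 + lam * z ^ 2) = 0 := by
      linear_combination lam * hz + hQ + (α * lam * x ^ 2 + β * lam * y ^ 2) * two
    rcases mul_eq_zero.mp e1 with hc | hc
    · exact absurd hc hM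
    · exact hc
  · rw [hv0, hv1, hv2]
    have e2 : (lam + lam') * (α' * x ^ 2 + x * y + β' * y ^ 2 + lam' * z ^ 2) = 0 := by
      linear_combination lam' * hz + hQ + (α' * lam' * x ^ 2 + β' * lam' * y ^ 2) * two
    rcases mul_eq_zero.mp e2 with hc | hc
    · exact absurd hc hM
    · exact hc

/-- The key geometric lemma: two disjoint conics of the given type have distinct `λ`'s
and the composed conic satisfies the trace condition. -/
lemma key_lemma {h : ℕ} (α β lam α0 β0 lam0 : F h) (hl : lam ≠ 0) (hl0 : lam0 ≠ 0)
    (htr : Tr (α * β) = 1) (htr0 : Tr (α0 * β0) = 1)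
    (hdis : Disjoint (conic α β lam) (conic α0 β0 lam0)) :
    lam + lam0 ≠ 0 ∧
      Tr ((α * lam + α0 * lam0) / (lam + lam0) * ((β * lam + β0 * lam0) / (lam + lam0))) = 1 := by
  have two : (2 : F h) = 0 := two_eq_zero
  have hM : lam + lam0 ≠ 0 := by
    intro hMeq
    have hll : lam0 = lam := by linear_combination hMeq - lam * two
    by_cases hαα : α = α0
    · obtain ⟨z, hz0⟩ := exists_sq (α / lam)
      have hz : lam * z ^ 2 = α := by rw [hz0]; field_simp
      have hvne : (![1, 0, z] : Fin 3 → F h) ≠ 0 := by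
        intro hcon
        have : (![1, 0, z] : Fin 3 → F h) 0 = 0 := by rw [hcon]; rfl
        simp at this
      refine common_point α β lam α0 β0 lam0 ![1, 0, z] hvne ?_ ?_ hdis
      · show α * 1 ^ 2 + 1 * 0 + β * 0 ^ 2 + lam * z ^ 2 = 0
        linear_combination hz + α * two
      · show α0 * 1 ^ 2 + 1 * 0 + β0 * 0 ^ 2 + lam0 * z ^ 2 = 0
        linear_combination hz + z ^ 2 * hll + hαα + α0 * two
    · obtain ⟨x, hx0⟩ := exists_sq ((β + β0) / (α + α0))
      have hαα' : α + α0 ≠ 0 := by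
        intro hcon
        apply hαα
        linear_combination hcon - α0 * two
      have hx : (α + α0) * x ^ 2 = β + β0 := by rw [hx0]; field_simp
      obtain ⟨z, hz0⟩ := exists_sq ((α * x ^ 2 + x + β) / lam)
      have hz : lam * z ^ 2 = α * x ^ 2 + x + β := by rw [hz0]; field_simp
      have hvne : (![x, 1, z] : Fin 3 → F h) ≠ 0 := by
        intro hcon
        have : (![x, 1, z] : Fin 3 → F h) 1 = 0 := by rw [hcon]; rfl
        simp at this
      refine common_point α β lam α0 β0 lam0 ![x, 1, z] hvne ?_ ?_ hdis
      · show α * x ^ 2 + x * 1 + β * 1 ^ 2 + lam * z ^ 2 = 0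
        linear_combination hz + (α * x ^ 2 + x + β) * two
      · show α0 * x ^ 2 + x * 1 + β0 * 1 ^ 2 + lam0 * z ^ 2 = 0
        linear_combination hz + z ^ 2 * hll + hx + (x + β + β0) * two
  refine ⟨hM, ?_⟩
  by_contra hcon
  have htr'' : Tr ((α * lam + α0 * lam0) / (lam + lam0)
      * ((β * lam + β0 * lam0) / (lam + lam0))) = 0 := by
    rcases zmod2_cases (Tr ((α * lam + α0 * lam0) / (lam + lam0)
      * ((β * lam + β0 * lam0) / (lam + lam0)))) with hc | hc
    · exact hc
    · exact absurd hc hcon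
  set t : F h := (α * lam + α0 * lam0) / (lam + lam0)
      * ((β * lam + β0 * lam0) / (lam + lam0)) + (α * β + α0 * β0) with htdef
  have htrt : Tr t = 0 := by
    rw [htdef, Tr_add, Tr_add, htr'', htr, htr0]
    decide
  obtain ⟨s, hs⟩ := artin_schreier (α * β) htr t htrt
  have hident : (lam + lam0) ^ 2 * t
      = (α * lam + α0 * lam0) * (β * lam + β0 * lam0)
        + (lam + lam0) ^ 2 * (α * β + α0 * β0) := by
    rw [htdef]
    field_simp
  have hs' : (lam + lam0) ^ 2 * (s ^ 2 + s)
      = (α * lam + α0 * lam0) * (β * lam + β0 * lam0)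
        + (lam + lam0) ^ 2 * (α * β + α0 * β0) := by
    rw [hs]; exact hident
  by_cases hAq : α * lam0 + α0 * lam = 0
  · -- degenerate quadratic: root (1, 0)
    refine quad_common_point α β lam α0 β0 lam0 1 0 hM (by simp) ?_ hdis
    rw [hAq]; ring
  · -- nondegenerate: use Artin-Schreier root
    set x : F h := s * (lam + lam0) / (α * lam0 + α0 * lam) with hxdef
    have hax : (α * lam0 + α0 * lam) * x = s * (lam + lam0) := by
      rw [hxdef]; field_simp
    have goal' : (s * (lam + lam0)) ^ 2 + (lam + lam0) * (s * (lam + lam0))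
        + (α * lam0 + α0 * lam) * (β * lam0 + β0 * lam) = 0 := by
      linear_combination hs' + ((lam + lam0) ^ 2 * (α * β + α0 * β0)
        + lam * lam0 * (α * β0 + α0 * β - α * β - α0 * β0)) * two
    have hQ : (α * lam0 + α0 * lam) * x ^ 2 + (lam + lam0) * x * 1
        + (β * lam0 + β0 * lam) * 1 ^ 2 = 0 := by
      have h1 : (α * lam0 + α0 * lam) * ((α * lam0 + α0 * lam) * x ^ 2
          + (lam + lam0) * x * 1 + (β * lam0 + β0 * lam) * 1 ^ 2)
          = ((α * lam0 + α0 * lam) * x) ^ 2 + (lam + lam0) * ((α * lam0 + α0 * lam) * x)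
            + (α * lam0 + α0 * lam) * (β * lam0 + β0 * lam) := by ring
      rw [hax] at h1
      rcases mul_eq_zero.mp (h1.trans goal') with hc | hc
      · exact absurd hc hAq
      · exact hc
    exact quad_common_point α β lam α0 β0 lam0 x 1 hM (by simp) hQ hdis

end MathonAux

namespace MathonAux

def phi {h : ℕ} (c : F h × F h × F h) : F h × F h × F h :=
  (c.1 * c.2.2, c.2.1 * c.2.2, c.2.2)

def psi {h : ℕ} (v : F h × F h × F h) : F h × F h × F h :=
  (v.1 / v.2.2, v.2.1 / v.2.2, v.2.2)

lemma compose_eq_psi {h : ℕ} (c c' : F h × F h × F h) :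
    compose c c' = psi (phi c + phi c') := rfl

lemma psi_phi {h : ℕ} (c : F h × F h × F h) (hc : c.2.2 ≠ 0) : psi (phi c) = c := by
  obtain ⟨a, b, l⟩ := c
  simp only [phi, psi] at *
  rw [mul_div_cancel_right₀ _ hc, mul_div_cancel_right₀ _ hc]

lemma phi_psi {h : ℕ} (v : F h × F h × F h) (hv : v.2.2 ≠ 0) : phi (psi v) = v := by
  obtain ⟨a, b, l⟩ := v
  simp only [phi, psi] at *
  rw [div_mul_cancel₀ _ hv, div_mul_cancel₀ _ hv]

lemma phi_lam {h : ℕ} (c : F h × F h × F h) : (phi c).2.2 = c.2.2 := rfl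

lemma add_lam {h : ℕ} (v w : F h × F h × F h) : (v + w).2.2 = v.2.2 + w.2.2 := rfl

lemma compose_lam {h : ℕ} (c c' : F h × F h × F h) :
    (compose c c').2.2 = c.2.2 + c'.2.2 := rfl

lemma phi_add_self {h : ℕ} (v : F h × F h × F h) : v + v = 0 := by
  obtain ⟨a, b, l⟩ := v
  simp only [Prod.mk_add_mk, CharTwo.add_self_eq_zero]
  rfl

lemma compose_comm {h : ℕ} (c c' : F h × F h × F h) : compose c c' = compose c' c := by
  rw [compose_eq_psi, compose_eq_psi, add_comm]

lemma phi_inj {h : ℕ} {c c' : F h × F h × F h} (hc : c.2.2 ≠ 0) (hc' : c'.2.2 ≠ 0)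
    (heq : phi c = phi c') : c = c' := by
  rw [← psi_phi c hc, ← psi_phi c' hc', heq]

lemma ne_of_add_ne_zero {h : ℕ} {a b : F h} (hab : a + b ≠ 0) : a ≠ b := by
  intro hcon
  apply hab
  rw [hcon]
  exact CharTwo.add_self_eq_zero b

lemma add_ne_zero_of_ne {h : ℕ} {a b : F h} (hab : a ≠ b) : a + b ≠ 0 := by
  intro hcon
  apply hab
  have two : (2 : F h) = 0 := two_eq_zero
  linear_combination hcon - b * two

lemma phi_compose {h : ℕ} (c c' : F h × F h × F h) (hcc' : c.2.2 + c'.2.2 ≠ 0) :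
    phi (compose c c') = phi c + phi c' := by
  rw [compose_eq_psi]
  exact phi_psi _ hcc'

end MathonAux

open MathonAux in
theorem stmt3 (h : ℕ) (hh : h ≠ 0) (d : ℕ) (C : Finset (F h × F h × F h))
    (hC : IsClosedConicSet C) (hcard : C.card + 1 = d)
    (α0 β0 lam0 : F h) (hl0 : lam0 ≠ 0) (htr0 : Tr (α0 * β0) = 1)
    (hdisj : ∀ c ∈ C, Disjoint (conic c.1 c.2.1 c.2.2) (conic α0 β0 lam0)) :
    ∃! C' : Finset (F h × F h × F h),
      IsClosedConicSet C' ∧ C'.card + 1 = 2 * d ∧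
        C ⊆ C' ∧ (α0, β0, lam0) ∈ C' := by
  classical
  obtain ⟨h1, h2, h3⟩ := hC
  set c0 : F h × F h × F h := (α0, β0, lam0) with hc0def
  have two : (2 : F h) = 0 := two_eq_zero
  -- key consequences of disjointness
  have hkey : ∀ c ∈ C, c.2.2 + lam0 ≠ 0
      ∧ Tr ((compose c c0).1 * (compose c c0).2.1) = 1 := by
    intro c hc
    obtain ⟨hcl, hctr⟩ := h1 c hc
    exact key_lemma c.1 c.2.1 c.2.2 α0 β0 lam0 hcl hl0 hctr htr0 (hdisj c hc)
  have hMne : ∀ c ∈ C, c.2.2 + lam0 ≠ 0 := fun c hc => (hkey c hc).1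
  have hlamne : ∀ c ∈ C, c.2.2 ≠ lam0 := fun c hc => ne_of_add_ne_zero (hMne c hc)
  have hc0nC : c0 ∉ C := fun hcon => (hlamne c0 hcon) rfl
  have hB : ∀ c ∈ C, ∀ c' ∈ C, c.2.2 = c'.2.2 → c = c' := by
    intro c hc c' hc' heq
    by_contra hne
    exact h2 c hc c' hc' hne heq
  have hsumne : ∀ c ∈ C, ∀ c' ∈ C, c ≠ c' → c.2.2 + c'.2.2 ≠ lam0 := by
    intro c hc c' hc' hne
    have hcc' := h3 c hc c' hc' hne
    have := hlamne _ hcc'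
    rwa [compose_lam] at this
  have hCne0 : ∀ c ∈ C, c.2.2 ≠ 0 := fun c hc => (h1 c hc).1
  -- λ's of composed conics avoid λ's of C
  have hDlam : ∀ c ∈ C, ∀ c'' ∈ C, c.2.2 + lam0 ≠ c''.2.2 := by
    intro c hc c'' hc'' hcon
    by_cases hcc : c = c''
    · subst hcc
      exact hl0 (by linear_combination hcon)
    · apply hsumne c hc c'' hc'' hcc
      linear_combination hcon + (c''.2.2 - lam0) * two
  have hDlam0 : ∀ c ∈ C, c.2.2 + lam0 ≠ lam0 := by
    intro c hc hcon
    exact hCne0 c hc (by linear_combination hcon)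
  -- the composed set
  set D : Finset (F h × F h × F h) := C.image (fun c => compose c c0) with hDdef
  set C' : Finset (F h × F h × F h) := insert c0 C ∪ D with hC'def
  have hmemD : ∀ e, e ∈ D ↔ ∃ c ∈ C, compose c c0 = e := by
    intro e; rw [hDdef, Finset.mem_image]
  have hmemC' : ∀ e, e ∈ C' ↔ (e = c0 ∨ e ∈ C) ∨ ∃ c ∈ C, compose c c0 = e := by
    intro e
    rw [hC'def, Finset.mem_union, Finset.mem_insert, hmemD]
  have hinjD : ∀ c ∈ C, ∀ c' ∈ C, compose c c0 = compose c' c0 → c = c' := by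
    intro c hc c' hc' heq
    have hphi : phi c + phi c0 = phi c' + phi c0 := by
      rw [← phi_compose c c0 (hMne c hc), ← phi_compose c' c0 (hMne c' hc'), heq]
    exact phi_inj (hCne0 c hc) (hCne0 c' hc') (add_right_cancel hphi)
  have hDnec0 : ∀ c ∈ C, compose c c0 ≠ c0 := by
    intro c hc hcon
    have := congrArg (fun e : F h × F h × F h => e.2.2) hcon
    simp only [compose_lam] at this
    exact hCne0 c hc (by linear_combination this)
  have hDnC : ∀ c ∈ C, compose c c0 ∉ C := by
    intro c hc hcon
    exact hDlam c hc _ hcon rfl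
  -- condition (1) for C'
  have hcond1 : ∀ e ∈ C', e.2.2 ≠ 0 ∧ Tr (e.1 * e.2.1) = 1 := by
    intro e he
    rcases (hmemC' e).mp he with (rfl | heC) | ⟨c, hc, rfl⟩
    · exact ⟨hl0, htr0⟩
    · exact h1 e heC
    · exact ⟨by rw [compose_lam]; exact hMne c hc, (hkey c hc).2⟩
  -- condition (2) : λ-injectivity on C'
  have hinj22 : ∀ e ∈ C', ∀ e' ∈ C', e.2.2 = e'.2.2 → e = e' := by
    intro e he e' he' heq
    rcases (hmemC' e).mp he with (rfl | heC) | ⟨c, hc, rfl⟩ <;>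
      rcases (hmemC' e').mp he' with (rfl | heC') | ⟨c', hc', rfl⟩
    · rfl
    · exact absurd heq.symm (hlamne e' heC')
    · exact absurd ((compose_lam c' c0) ▸ heq.symm) (hDlam0 c' hc')
    · exact absurd heq (hlamne e heC)
    · exact hB e heC e' heC' heq
    · exact absurd ((compose_lam c' c0) ▸ heq.symm) (hDlam c' hc' e heC)
    · exact absurd ((compose_lam c c0) ▸ heq) (hDlam0 c hc)
    · exact absurd ((compose_lam c c0) ▸ heq) (hDlam c hc e' heC')
    · have : c.2.2 + lam0 = c'.2.2 + lam0 := by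
        rw [← compose_lam c c0, ← compose_lam c' c0]; exact heq
      rw [hinjD c hc c' hc' (by
        have hcc : c = c' := hB c hc c' hc' (add_right_cancel this)
        rw [hcc])]
  -- composition identities
  have hphic0 : (phi c0).2.2 ≠ 0 := hl0
  have comp3a : ∀ c ∈ C, compose c (compose c c0) = c0 := by
    intro c hc
    rw [compose_eq_psi, phi_compose c c0 (hMne c hc), ← add_assoc, phi_add_self, zero_add]
    exact psi_phi c0 hl0
  have comp3b : ∀ c ∈ C, ∀ c' ∈ C, c ≠ c' →
      compose c (compose c' c0) = compose (compose c c') c0 := by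
    intro c hc c' hc' hne
    have hll' : c.2.2 + c'.2.2 ≠ 0 := add_ne_zero_of_ne (h2 c hc c' hc' hne)
    rw [compose_eq_psi c, phi_compose c' c0 (hMne c' hc'),
      compose_eq_psi (compose c c'), phi_compose c c' hll', add_assoc]
  have comp6 : ∀ c' ∈ C, compose c0 (compose c' c0) = c' := by
    intro c' hc'
    rw [compose_eq_psi, phi_compose c' c0 (hMne c' hc'), add_left_comm, phi_add_self,
      add_zero]
    exact psi_phi c' (hCne0 c' hc')
  have comp9 : ∀ c ∈ C, ∀ c' ∈ C, c ≠ c' →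
      compose (compose c c0) (compose c' c0) = compose c c' := by
    intro c hc c' hc' hne
    rw [compose_eq_psi (compose c c0), phi_compose c c0 (hMne c hc),
      phi_compose c' c0 (hMne c' hc'), add_add_add_comm, phi_add_self, add_zero,
      ← compose_eq_psi]
  -- closure of C'
  have hclosed : ∀ e ∈ C', ∀ e' ∈ C', e ≠ e' → compose e e' ∈ C' := by
    intro e he e' he' hne
    rcases (hmemC' e).mp he with (rfl | heC) | ⟨c, hc, rfl⟩ <;>
      rcases (hmemC' e').mp he' with (rfl | heC') | ⟨c', hc', rfl⟩
    · exact absurd rfl hne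
    · rw [compose_comm]
      exact (hmemC' _).mpr (Or.inr ⟨e', heC', rfl⟩)
    · rw [comp6 c' hc']
      exact (hmemC' _).mpr (Or.inl (Or.inr hc'))
    · exact (hmemC' _).mpr (Or.inr ⟨e, heC, rfl⟩)
    · exact (hmemC' _).mpr (Or.inl (Or.inr (h3 e heC e' heC' hne)))
    · by_cases hcc : e = c'
      · subst hcc
        rw [comp3a e heC]
        exact (hmemC' _).mpr (Or.inl (Or.inl rfl))
      · rw [comp3b e heC c' hc' hcc]
        exact (hmemC' _).mpr (Or.inr ⟨compose e c', h3 e heC c' hc' hcc, rfl⟩)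
    · rw [compose_comm, comp6 c hc]
      exact (hmemC' _).mpr (Or.inl (Or.inr hc))
    · by_cases hcc : e' = c
      · subst hcc
        rw [compose_comm, comp3a e' heC']
        exact (hmemC' _).mpr (Or.inl (Or.inl rfl))
      · rw [compose_comm, comp3b e' heC' c hc hcc]
        exact (hmemC' _).mpr (Or.inr ⟨compose e' c, h3 e' heC' c hc hcc, rfl⟩)
    · have hcc : c ≠ c' := by
        intro hcon
        exact hne (by rw [hcon])
      rw [comp9 c hc c' hc' hcc]
      exact (hmemC' _).mpr (Or.inl (Or.inr (h3 c hc c' hc' hcc)))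
  have hC'closed : IsClosedConicSet C' := by
    refine ⟨hcond1, ?_, hclosed⟩
    intro e he e' he' hne hcon
    exact hne (hinj22 e he e' he' hcon)
  -- cardinality of C'
  have hDcard : D.card = C.card := by
    rw [hDdef]
    apply Finset.card_image_of_injOn
    intro c hc c' hc' heq
    exact hinjD c hc c' hc' heq
  have hdisjCD : Disjoint (insert c0 C) D := by
    rw [Finset.disjoint_right]
    intro e heD
    obtain ⟨c, hc, rfl⟩ := (hmemD e).mp heD
    rw [Finset.mem_insert]
    rintro (hcon | hcon)
    · exact hDnec0 c hc hcon
    · exact hDnC c hc hcon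
  have hC'card : C'.card = 2 * C.card + 1 := by
    rw [hC'def, Finset.card_union_of_disjoint hdisjCD,
      Finset.card_insert_of_notMem hc0nC, hDcard]
    omega
  -- existence and uniqueness
  refine ⟨C', ⟨hC'closed, by omega, ?_, ?_⟩, ?_⟩
  · intro c hc
    exact (hmemC' c).mpr (Or.inl (Or.inr hc))
  · exact (hmemC' c0).mpr (Or.inl (Or.inl rfl))
  · rintro C'' ⟨⟨g1, g2, g3⟩, gcard, gsub, gmem⟩
    have hsub : C' ⊆ C'' := by
      intro e he
      rcases (hmemC' e).mp he with (rfl | heC) | ⟨c, hc, rfl⟩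
      · exact gmem
      · exact gsub heC
      · refine g3 c (gsub hc) c0 gmem ?_
        intro hcon
        exact hlamne c hc (by rw [hcon])
    have : C' = C'' := Finset.eq_of_subset_of_card_le hsub (by omega)
    exact this.symm
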